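/- Let H be a symmetric positive definite real n×n matrix with trace(H) = 1, and suppose n ≥ 3. Then det(H)^{1/2} / det(I - H) ≤ (√n/(n-1))^n, with equality if and only if H = (1/n)·I. -/

import Mathlib

open Real Finset Set

noncomputable def gg (x : ℝ) : ℝ := Real.log x / 2 - Real.log (1 - x)

noncomputable def cc (N : ℝ) : ℝ := N / 2 + N / (N - 1)

noncomputable def phi (N : ℝ) (x : ℝ) : ℝ := gg (1 / N) + cc N * (x - 1 / N) - gg x

lemma hasDerivAt_gg {x : ℝ} (h0 : 0 < x) (h1 : x < 1) :
    HasDerivAt gg (1 / (2 * x) + 1 / (1 - x)) x := by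
  have h2 : (0:ℝ) < 1 - x := by linarith
  have d1 : HasDerivAt (fun y : ℝ => Real.log y / 2) (x⁻¹ / 2) x :=
    (Real.hasDerivAt_log h0.ne').div_const 2
  have d3 : HasDerivAt (fun y : ℝ => (1:ℝ) - y) (-1) x := (hasDerivAt_id x).const_sub 1
  have d2 : HasDerivAt (fun y : ℝ => Real.log (1 - y)) ((1-x)⁻¹ * (-1)) x := by
    exact (Real.hasDerivAt_log h2.ne').comp x d3
  have := d1.sub d2
  exact this.congr_deriv (by ring)

lemma hasDerivAt_phi (N : ℝ) {x : ℝ} (h0 : 0 < x) (h1 : x < 1) :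
    HasDerivAt (phi N) (cc N - (1 / (2 * x) + 1 / (1 - x))) x := by
  have d1 : HasDerivAt (fun y : ℝ => gg (1 / N) + cc N * (y - 1 / N)) (cc N) x := by
    simpa using (((hasDerivAt_id x).sub_const (1/N)).const_mul (cc N)).const_add (gg (1/N))
  exact d1.sub (hasDerivAt_gg h0 h1)

lemma deriv_phi (N : ℝ) {x : ℝ} (h0 : 0 < x) (h1 : x < 1) :
    deriv (phi N) x = cc N - (1 / (2 * x) + 1 / (1 - x)) :=
  (hasDerivAt_phi N h0 h1).deriv

lemma deriv_phi_factor (N : ℝ) (hN : 3 ≤ N) {x : ℝ} (h0 : 0 < x) (h1 : x < 1) :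
    cc N - (1 / (2 * x) + 1 / (1 - x)) =
      cc N * (x - 1 / N) * ((N - 1) / (N + 1) - x) / (x * (1 - x)) := by
  have hx : x ≠ 0 := h0.ne'
  have hx1 : (1:ℝ) - x ≠ 0 := by linarith
  have hN0 : N ≠ 0 := by linarith
  have hN1 : N - 1 ≠ 0 := by linarith
  have hN2 : N + 1 ≠ 0 := by linarith
  unfold cc
  field_simp
  ring

lemma cc_pos {N : ℝ} (hN : 3 ≤ N) : 0 < cc N := by
  unfold cc
  have h1 : (0:ℝ) < N - 1 := by linarith
  positivity

lemma phi_at (N : ℝ) : phi N (1/N) = 0 := by simp [phi]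

lemma phi_pos (N : ℝ) (hN : 3 ≤ N) {x : ℝ} (h0 : 0 < x) (hx : x ≤ 1/2) (hne : x ≠ 1/N) :
    0 < phi N x := by
  have hN0 : (0:ℝ) < N := by linarith
  have hr : 1/2 ≤ (N-1)/(N+1) := by
    rw [div_le_div_iff₀ (by norm_num) (by linarith)]; linarith
  have hn3 : 1/N ≤ 1/3 := by
    rw [div_le_div_iff₀ hN0 (by norm_num)]; linarith
  have hn0 : 0 < 1/N := by positivity
  rcases lt_or_gt_of_ne hne with hlt | hgt
  · have anti : StrictAntiOn (phi N) (Ioc 0 (1/N)) := by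
      apply strictAntiOn_of_deriv_neg (convex_Ioc _ _)
      · intro y hy
        exact (hasDerivAt_phi N hy.1 (by linarith [hy.2])).continuousAt.continuousWithinAt
      · intro y hy
        rw [interior_Ioc] at hy
        have hy0 : 0 < y := hy.1
        have hy1 : y < 1 := by linarith [hy.2]
        rw [deriv_phi N hy0 hy1, deriv_phi_factor N hN hy0 hy1]
        apply div_neg_of_neg_of_pos
        · apply mul_neg_of_neg_of_pos
          · exact mul_neg_of_pos_of_neg (cc_pos hN) (by linarith [hy.2])
          · have : y < (N-1)/(N+1) := by linarith [hy.2]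
            linarith
        · nlinarith
    have := anti (Set.mem_Ioc.2 ⟨h0, hlt.le⟩) (Set.mem_Ioc.2 ⟨hn0, le_refl _⟩) hlt
    rwa [phi_at] at this
  · have mono : StrictMonoOn (phi N) (Icc (1/N) (1/2)) := by
      apply strictMonoOn_of_deriv_pos (convex_Icc _ _)
      · intro y hy
        have hy0 : 0 < y := lt_of_lt_of_le hn0 hy.1
        exact (hasDerivAt_phi N hy0 (by linarith [hy.2])).continuousAt.continuousWithinAt
      · intro y hy
        rw [interior_Icc] at hy
        have hy0 : 0 < y := lt_trans hn0 hy.1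
        have hy1 : y < 1 := by linarith [hy.2]
        rw [deriv_phi N hy0 hy1, deriv_phi_factor N hN hy0 hy1]
        apply div_pos
        · apply mul_pos
          · exact mul_pos (cc_pos hN) (by linarith [hy.1])
          · have : y < (N-1)/(N+1) := by linarith [hy.2]
            linarith
        · nlinarith
    have := mono (Set.mem_Icc.2 ⟨le_refl _, by linarith⟩)
      (Set.mem_Icc.2 ⟨hgt.le, hx⟩) hgt
    rwa [phi_at] at this

lemma tangent_le (N : ℝ) (hN : 3 ≤ N) {x : ℝ} (h0 : 0 < x) (hx : x ≤ 1/2) :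
    gg x ≤ gg (1/N) + cc N * (x - 1/N) := by
  rcases eq_or_ne x (1/N) with rfl | hne
  · simp
  · have := phi_pos N hN h0 hx hne
    unfold phi at this; linarith

lemma tangent_lt (N : ℝ) (hN : 3 ≤ N) {x : ℝ} (h0 : 0 < x) (hx : x ≤ 1/2) (hne : x ≠ 1/N) :
    gg x < gg (1/N) + cc N * (x - 1/N) := by
  have := phi_pos N hN h0 hx hne
  unfold phi at this; linarith

lemma log_two_ge : (9:ℝ)/13 ≤ Real.log 2 := by
  have h9 : Real.exp 9 ≤ 8192 := by
    have h := Real.exp_one_lt_d9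
    have : Real.exp 9 = (Real.exp 1) ^ (9:ℕ) := by
      rw [← Real.exp_nat_mul]; norm_num
    rw [this]
    calc (Real.exp 1)^(9:ℕ) ≤ 2.7182818286^(9:ℕ) := by
          apply pow_le_pow_left₀ (Real.exp_pos 1).le h.le
      _ ≤ 8192 := by norm_num
  have : (9:ℝ) ≤ 13 * Real.log 2 := by
    have := Real.log_le_log (Real.exp_pos 9) h9
    rw [Real.log_exp] at this
    have h2 : Real.log 8192 = 13 * Real.log 2 := by
      rw [show (8192:ℝ) = 2^(13:ℕ) by norm_num, Real.log_pow]; norm_num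
    linarith [this, h2.symm.le]
  linarith

lemma log_le_frac {x : ℝ} (hx : 0 < x) : Real.log x ≤ x * (46/125) := by
  have h1 : Real.log (x / Real.exp 1) ≤ x / Real.exp 1 - 1 :=
    Real.log_le_sub_one_of_pos (by positivity)
  rw [Real.log_div hx.ne' (Real.exp_pos 1).ne', Real.log_exp] at h1
  have h2 : x / Real.exp 1 ≤ x * (46/125) := by
    rw [div_le_iff₀ (Real.exp_pos 1)]
    have : (125:ℝ)/46 ≤ Real.exp 1 := by
      have := Real.exp_one_gt_d9
      linarith
    nlinarith
  linarith

lemma spade {n : ℕ} (hn : 4 ≤ n) :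
    ((4:ℝ) - n) * Real.log 2 ≤ n * Real.log n - (n+1) * Real.log (n-1) := by
  have hN0 : (0:ℝ) < n := by positivity
  rcases eq_or_lt_of_le hn with h4 | h5
  · -- n = 4 : 0 ≤ 4 log 4 - 5 log 3
    have : n = 4 := h4.symm
    subst this
    push_cast
    have h1 : Real.log 243 ≤ Real.log 256 := Real.log_le_log (by norm_num) (by norm_num)
    have h2 : Real.log 243 = 5 * Real.log 3 := by
      rw [show (243:ℝ) = 3^(5:ℕ) by norm_num, Real.log_pow]; norm_num
    have h3 : Real.log 256 = 4 * Real.log 4 := by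
      rw [show (256:ℝ) = 4^(4:ℕ) by norm_num, Real.log_pow]; norm_num
    norm_num
    linarith
  · -- n ≥ 5
    have hn5 : (5:ℝ) ≤ n := by exact_mod_cast h5
    have hm : (0:ℝ) < (n:ℝ) - 1 := by linarith
    have key1 : (1:ℝ) ≤ n * (Real.log n - Real.log (n-1)) := by
      have h : Real.log ((n-1)/n) ≤ ((n:ℝ)-1)/n - 1 := Real.log_le_sub_one_of_pos (by positivity)
      rw [Real.log_div hm.ne' hN0.ne'] at h
      have h2 : ((n:ℝ)-1)/n - 1 = -(1/n) := by field_simp; ring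
      rw [h2] at h
      have := mul_le_mul_of_nonneg_left (neg_le_neg h) hN0.le
      have hh : (n:ℝ) * (1/n) = 1 := by field_simp
      nlinarith
    have key2 : Real.log ((n:ℝ)-1) ≤ ((n:ℝ)-1) * (46/125) := log_le_frac hm
    have key3 : ((4:ℝ) - n) * Real.log 2 ≤ ((4:ℝ) - n) * (9/13) := by
      apply mul_le_mul_of_nonpos_left log_two_ge (by linarith)
    have expand : (n:ℝ) * Real.log n - (n+1) * Real.log (n-1)
        = n * (Real.log n - Real.log (n-1)) - Real.log (n-1) := by ring
    rw [expand]
    nlinarith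

lemma sum_log_le {ι : Type*} {t : Finset ι} (ht : t.Nonempty) {f : ι → ℝ}
    (hf : ∀ j ∈ t, 0 < f j) :
    ∑ j ∈ t, Real.log (f j) ≤ t.card * Real.log ((∑ j ∈ t, f j) / t.card) := by
  have hc : (0:ℝ) < t.card := by
    exact_mod_cast Finset.card_pos.2 ht
  have jensen := strictConcaveOn_log_Ioi.concaveOn.le_map_sum
    (t := t) (w := fun _ => (t.card : ℝ)⁻¹) (p := f)
    (fun j _ => by positivity)
    (by rw [Finset.sum_const, nsmul_eq_mul]; field_simp)
    (fun j hj => Set.mem_Ioi.2 (hf j hj))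
  simp only [smul_eq_mul] at jensen
  have h1 : ∑ j ∈ t, (t.card : ℝ)⁻¹ * Real.log (f j)
      = (t.card : ℝ)⁻¹ * ∑ j ∈ t, Real.log (f j) := by rw [Finset.mul_sum]
  have h2 : ∑ j ∈ t, (t.card : ℝ)⁻¹ * f j = (∑ j ∈ t, f j) / t.card := by
    rw [← Finset.mul_sum]; ring
  rw [h1, h2] at jensen
  calc ∑ j ∈ t, Real.log (f j) = t.card * ((t.card:ℝ)⁻¹ * ∑ j ∈ t, Real.log (f j)) := by
        field_simp
    _ ≤ t.card * Real.log ((∑ j ∈ t, f j) / t.card) := by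
        apply mul_le_mul_of_nonneg_left jensen hc.le

lemma chord_log {x s : ℝ} (h0 : 0 < x) (has : x ≤ s) (hs : s < 1) :
    (x/s) * Real.log (1-s) ≤ Real.log (1-x) := by
  have hs0 : 0 < s := lt_of_lt_of_le h0 has
  have w1 : (0:ℝ) ≤ 1 - x/s := by rw [sub_nonneg, div_le_one hs0]; exact has
  have w2 : (0:ℝ) ≤ x/s := by positivity
  have w3 : (1 - x/s) + x/s = 1 := by ring
  have key := strictConcaveOn_log_Ioi.concaveOn.2
    (Set.mem_Ioi.2 one_pos) (Set.mem_Ioi.2 (by linarith : (0:ℝ) < 1 - s))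
    w1 w2 w3
  simp only [smul_eq_mul, Real.log_one, mul_one, mul_zero] at key
  have e : 1 - x/s + x/s * (1-s) = 1 - x := by field_simp; ring
  rw [e] at key
  linarith [key]

lemma gg_inv {N : ℝ} (hN : 1 < N) : gg (1/N) = Real.log N / 2 - Real.log (N - 1) := by
  have hN0 : (0:ℝ) < N := by linarith
  unfold gg
  rw [one_div, Real.log_inv]
  have h1 : (1:ℝ) - N⁻¹ = (N-1)/N := by field_simp
  rw [h1, Real.log_div (by linarith) hN0.ne']
  ring

lemma pair_bound {a b : ℝ} (ha : 0 < a) (hb : 0 < b) (hs : a + b < 1/2) :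
    gg a + gg b ≤ Real.log (a+b) - Real.log 2 - 2 * Real.log (1 - (a+b)/2) := by
  set s := a + b with hsdef
  set u := 1 - s with hudef
  set p := a * b with hpdef
  set q := s^2/4 with hqdef
  have hs0 : 0 < s := by positivity
  have hu : 1/2 < u := by simp [hudef]; linarith
  have ha1 : a < 1 := by linarith
  have hb1 : b < 1 := by linarith
  have hp0 : 0 < p := by positivity
  have hq0 : 0 < q := by positivity
  have hpq : p ≤ q := by simp [hpdef, hqdef, hsdef]; nlinarith [sq_nonneg (a-b)]
  have hup : 0 < u + p := by linarith
  have huq : 0 < u + q := by linarith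
  have e1 : gg a + gg b = Real.log p / 2 - Real.log (u + p) := by
    unfold gg
    rw [hpdef, Real.log_mul ha.ne' hb.ne']
    have : (1-a)*(1-b) = u + p := by simp [hudef, hsdef, hpdef]; ring
    rw [← this, Real.log_mul (by linarith) (by linarith)]
    ring
  have key : p * (u+q)^2 ≤ q * (u+p)^2 := by
    have h1 : 0 ≤ q - p := by linarith
    have h2 : 0 ≤ u^2 - p*q := by
      have hq16 : q ≤ 1/16 := by rw [hqdef]; nlinarith
      have hpq2 : p*q ≤ (1/16)*(1/16) :=
        mul_le_mul (hpq.trans hq16) hq16 hq0.le (by norm_num)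
      nlinarith
    nlinarith [mul_nonneg h1 h2]
  have logkey : Real.log p + 2 * Real.log (u+q) ≤ Real.log q + 2 * Real.log (u+p) := by
    have := Real.log_le_log (by positivity) key
    rw [Real.log_mul hp0.ne' (by positivity), Real.log_mul hq0.ne' (by positivity),
      Real.log_pow, Real.log_pow] at this
    push_cast at this
    linarith
  have e2 : Real.log q = 2 * (Real.log s - Real.log 2) := by
    have : q = (s/2)^2 := by rw [hqdef]; ring
    rw [this, Real.log_pow, Real.log_div hs0.ne' (by norm_num)]
    push_cast; ring
  have e3 : Real.log (u+q) = 2 * Real.log (1 - s/2) := by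
    have : u + q = (1-s/2)^2 := by rw [hudef, hqdef]; ring
    rw [this, Real.log_pow]; push_cast; ring
  rw [e1]
  rw [e2, e3] at logkey
  linarith

lemma h_mono {u : ℝ} (h1 : 1/2 ≤ u) (h2 : u ≤ 1) :
    Real.log u / 2 - 2 * Real.log (1+u) ≤ Real.log (1/2) / 2 - 2 * Real.log (3/2) := by
  have hu0 : (0:ℝ) < u := by linarith
  have key : u * (3/2)^4 ≤ (1/2) * (1+u)^4 := by nlinarith [sq_nonneg (u - 1/2), sq_nonneg (u+1)]
  have lkey := Real.log_le_log (by positivity) key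
  rw [Real.log_mul hu0.ne' (by positivity), Real.log_mul (by norm_num) (by positivity),
    Real.log_pow, Real.log_pow] at lkey
  push_cast at lkey
  linarith

lemma log3_log2 : 11 * Real.log 2 < 7 * Real.log 3 := by
  have h := Real.log_lt_log (by norm_num : (0:ℝ) < 2048) (by norm_num : (2048:ℝ) < 2187)
  rw [show (2048:ℝ) = 2^(11:ℕ) by norm_num, show (2187:ℝ) = 3^(7:ℕ) by norm_num,
    Real.log_pow, Real.log_pow] at h
  push_cast at h
  linarith

lemma numeric3 : Real.log (1/2) / 2 - 2 * Real.log (3/2) + Real.log 2 < 3 * gg (1/3) := by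
  have e1 : Real.log (1/2:ℝ) = - Real.log 2 := by
    rw [one_div, Real.log_inv]
  have e2 : Real.log (3/2:ℝ) = Real.log 3 - Real.log 2 := Real.log_div (by norm_num) (by norm_num)
  have e3 : gg (1/3) = - Real.log 3 / 2 - (Real.log 2 - Real.log 3) := by
    unfold gg
    rw [show (1:ℝ) - 1/3 = 2/3 by norm_num, one_div, Real.log_inv,
      Real.log_div (by norm_num) (by norm_num)]
  rw [e1, e2, e3]
  linarith [log3_log2]

lemma case2 {n : ℕ} (hn : 3 ≤ n) (μ : Fin n → ℝ) (hpos : ∀ i, 0 < μ i)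
    (hsum : ∑ i, μ i = 1) {k : Fin n} (hk : 1/2 < μ k) :
    ∑ i, gg (μ i) < n * gg (1/(n:ℝ)) := by
  classical
  have hN : (3:ℝ) ≤ n := by exact_mod_cast hn
  set E := Finset.univ.erase k with hE
  have hkmem : k ∈ (Finset.univ : Finset (Fin n)) := Finset.mem_univ k
  have hEcard : E.card = n - 1 := by
    rw [hE, Finset.card_erase_of_mem hkmem, Finset.card_univ, Fintype.card_fin]
  have hEne : E.Nonempty := by
    rw [← Finset.card_pos, hEcard]; omega
  set s := ∑ j ∈ E, μ j with hs
  have hsplit : μ k + s = 1 := by rw [hs, hE, Finset.add_sum_erase _ _ hkmem, hsum]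
  have hs0 : 0 < s := Finset.sum_pos (fun j _ => hpos j) hEne
  have hs12 : s < 1/2 := by linarith
  have hsum_split : ∑ i, gg (μ i) = gg (μ k) + ∑ j ∈ E, gg (μ j) := by
    rw [hE, Finset.add_sum_erase _ (fun i => gg (μ i)) hkmem]
  have hμk : μ k = 1 - s := by linarith
  have hggk : gg (μ k) = Real.log (1-s) / 2 - Real.log s := by
    rw [hμk]; unfold gg; rw [show (1:ℝ) - (1-s) = s by ring]
  rcases eq_or_lt_of_le hn with h3 | h4
  · -- n = 3
    have h3' : n = 3 := h3.symm
    subst h3'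
    obtain ⟨a, b, hab, hEab⟩ := Finset.card_eq_two.mp (by rw [hEcard])
    have hsab : s = μ a + μ b := by rw [hs, hEab, Finset.sum_pair hab]
    have hEgg : ∑ j ∈ E, gg (μ j) = gg (μ a) + gg (μ b) := by
      rw [hEab, Finset.sum_pair hab]
    have hpb := pair_bound (hpos a) (hpos b) (by rw [← hsab]; exact hs12)
    rw [← hsab] at hpb
    set u := 1 - s with hu
    have e4 : Real.log (1 - s/2) = Real.log (1+u) - Real.log 2 := by
      rw [show (1:ℝ) - s/2 = (1+u)/2 by rw [hu]; ring,
        Real.log_div (by rw [hu]; linarith) (by norm_num)]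
    have hm := h_mono (u := u) (by rw [hu]; linarith) (by rw [hu]; linarith)
    have hnum := numeric3
    have hend : (↑(3:ℕ):ℝ) * gg (1/(↑(3:ℕ):ℝ)) = 3 * gg (1/3) := by norm_num
    rw [hend, hsum_split, hggk, hEgg]
    linarith [hpb, hm, hnum, e4]
  · -- n ≥ 4
    have hN4 : (4:ℝ) ≤ n := by exact_mod_cast h4
    have hcard : ((E.card : ℝ)) = (n:ℝ) - 1 := by
      rw [hEcard, Nat.cast_sub (by omega : 1 ≤ n), Nat.cast_one]
    have hN1 : (0:ℝ) < (n:ℝ) - 1 := by linarith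
    have hlogs : ∑ j ∈ E, Real.log (μ j) ≤ ((n:ℝ)-1) * Real.log (s/((n:ℝ)-1)) := by
      have := sum_log_le hEne (fun j _ => hpos j)
      rwa [hcard, ← hs] at this
    have hchord : Real.log (1-s) ≤ ∑ j ∈ E, Real.log (1 - μ j) := by
      have hsum1 : ∑ j ∈ E, (μ j / s) = 1 := by
        rw [← Finset.sum_div, ← hs, div_self hs0.ne']
      calc Real.log (1-s) = (∑ j ∈ E, (μ j / s)) * Real.log (1-s) := by
            rw [hsum1, one_mul]
        _ = ∑ j ∈ E, (μ j / s) * Real.log (1-s) := Finset.sum_mul _ _ _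
        _ ≤ ∑ j ∈ E, Real.log (1 - μ j) := Finset.sum_le_sum (fun j hj =>
            chord_log (hpos j) (Finset.single_le_sum (fun i _ => (hpos i).le) hj)
              (by linarith))
    have hEgg : ∑ j ∈ E, gg (μ j) ≤
        ((n:ℝ)-1)/2 * (Real.log s - Real.log ((n:ℝ)-1)) - Real.log (1-s) := by
      have e : ∑ j ∈ E, gg (μ j)
          = (∑ j ∈ E, Real.log (μ j))/2 - ∑ j ∈ E, Real.log (1 - μ j) := by
        unfold gg; rw [Finset.sum_sub_distrib, Finset.sum_div]
      have e2 : Real.log (s/((n:ℝ)-1)) = Real.log s - Real.log ((n:ℝ)-1) :=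
        Real.log_div hs0.ne' hN1.ne'
      rw [e2] at hlogs
      rw [e]
      linarith
    have hlt1 : Real.log s < - Real.log 2 := by
      have := Real.log_lt_log hs0 hs12
      rwa [show (1:ℝ)/2 = 2⁻¹ by norm_num, Real.log_inv] at this
    have hlt2 : - Real.log (1-s) < Real.log 2 := by
      have := Real.log_lt_log (by norm_num : (0:ℝ) < 2⁻¹) (by linarith : (2:ℝ)⁻¹ < 1 - s)
      rw [Real.log_inv] at this
      linarith
    have coeff : (0:ℝ) < ((n:ℝ)-3)/2 := by linarith
    have hprod := mul_lt_mul_of_pos_left hlt1 coeff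
    have hsp := spade h4
    have target : (n:ℝ) * gg (1/(n:ℝ))
        = (n:ℝ)/2 * Real.log n - n * Real.log ((n:ℝ)-1) := by
      rw [gg_inv (by linarith : (1:ℝ) < n)]; ring
    rw [hsum_split, hggk, target]
    nlinarith [hEgg, hprod, hlt2, hsp]

lemma scalar_main {n : ℕ} (hn : 3 ≤ n) (μ : Fin n → ℝ) (hpos : ∀ i, 0 < μ i)
    (hsum : ∑ i, μ i = 1) :
    (∑ i, gg (μ i)) ≤ n * gg (1/(n:ℝ)) ∧
      ((∑ i, gg (μ i)) = n * gg (1/(n:ℝ)) ↔ ∀ i, μ i = 1/(n:ℝ)) := by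
  have hN : (3:ℝ) ≤ n := by exact_mod_cast hn
  have hconst : ∑ _i : Fin n, gg (1/(n:ℝ)) = n * gg (1/(n:ℝ)) := by
    rw [Finset.sum_const, Finset.card_univ, Fintype.card_fin, nsmul_eq_mul]
  by_cases hcase : ∀ i, μ i ≤ 1/2
  · have hle : ∀ i, gg (μ i) ≤ gg (1/(n:ℝ)) + cc n * (μ i - 1/(n:ℝ)) :=
      fun i => tangent_le n hN (hpos i) (hcase i)
    have hsum2 : ∑ i, (gg (1/(n:ℝ)) + cc n * (μ i - 1/(n:ℝ))) = n * gg (1/(n:ℝ)) := by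
      rw [Finset.sum_add_distrib, hconst, ← Finset.mul_sum, Finset.sum_sub_distrib, hsum,
        Finset.sum_const, Finset.card_univ, Fintype.card_fin, nsmul_eq_mul]
      have : (n:ℝ) * (1/(n:ℝ)) = 1 := by field_simp
      rw [this]
      ring
    have hmain : (∑ i, gg (μ i)) ≤ n * gg (1/(n:ℝ)) := by
      rw [← hsum2]
      exact Finset.sum_le_sum (fun i _ => hle i)
    refine ⟨hmain, ?_, ?_⟩
    · intro heq
      by_contra hc
      push_neg at hc
      obtain ⟨j, hj⟩ := hc
      have hstrict : (∑ i, gg (μ i)) < ∑ i, (gg (1/(n:ℝ)) + cc n * (μ i - 1/(n:ℝ))) :=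
        Finset.sum_lt_sum (fun i _ => hle i)
          ⟨j, Finset.mem_univ j, tangent_lt n hN (hpos j) (hcase j) hj⟩
      rw [hsum2] at hstrict
      linarith
    · intro h
      have : ∀ i, gg (μ i) = gg (1/(n:ℝ)) := fun i => by rw [h i]
      rw [Finset.sum_congr rfl (fun i _ => this i), hconst]
  · push_neg at hcase
    obtain ⟨k, hk⟩ := hcase
    have hstrict := case2 hn μ hpos hsum hk
    refine ⟨hstrict.le, ?_, ?_⟩
    · intro heq; exact absurd heq hstrict.ne
    · intro h
      exfalso
      have := h k
      have h13 : 1/(n:ℝ) ≤ 1/3 := by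
        rw [div_le_div_iff₀ (by linarith) (by norm_num)]; linarith
      linarith

lemma sqrt_pow' {x : ℝ} (hx : 0 ≤ x) (n : ℕ) : Real.sqrt (x ^ n) = (Real.sqrt x) ^ n := by
  have h1 : 0 ≤ (Real.sqrt x)^n := pow_nonneg (Real.sqrt_nonneg x) n
  rw [show x^n = ((Real.sqrt x)^n)^2 by
      rw [← pow_mul, mul_comm, pow_mul, Real.sq_sqrt hx],
    Real.sqrt_sq h1]

theorem stmt_7 (n : ℕ) (hn : 3 ≤ n) (H : Matrix (Fin n) (Fin n) ℝ)
    (hH : H.PosDef) (hsymm : H.IsSymm) (htr : H.trace = 1) :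
    Real.sqrt H.det / (1 - H).det ≤ (Real.sqrt n / ((n : ℝ) - 1)) ^ n ∧
    (Real.sqrt H.det / (1 - H).det = (Real.sqrt n / ((n : ℝ) - 1)) ^ n
      ↔ H = ((n : ℝ)⁻¹) • (1 : Matrix (Fin n) (Fin n) ℝ)) := by
  have hn3 : (3:ℝ) ≤ n := by exact_mod_cast hn
  have hn0 : (0:ℝ) < n := by linarith
  have hE : H.IsHermitian := hH.1
  set μ := hE.eigenvalues with hμdef
  have hpos : ∀ i, 0 < μ i := fun i => hH.eigenvalues_pos i
  have hdet : H.det = ∏ i, μ i := by simpa using hE.det_eq_prod_eigenvalues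
  have hone : (hE.eigenvectorUnitary : Matrix (Fin n) (Fin n) ℝ) *
      (star (hE.eigenvectorUnitary : Matrix (Fin n) (Fin n) ℝ)) = 1 :=
    Unitary.coe_mul_star_self _
  have htrace : ∑ i, μ i = 1 := by
    have h1 : H.trace = ∑ i, μ i := by
      conv_lhs => rw [hE.spectral_theorem, Unitary.conjStarAlgAut_apply]
      rw [Matrix.trace_mul_cycle]
      rw [show (star (hE.eigenvectorUnitary : Matrix (Fin n) (Fin n) ℝ)) *
        (hE.eigenvectorUnitary : Matrix (Fin n) (Fin n) ℝ) = 1 from Unitary.coe_star_mul_self _,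
        one_mul, Matrix.trace_diagonal]
      simp [hμdef]
    rw [← h1, htr]
  have hdet2 : (1 - H).det = ∏ i, (1 - μ i) := by
    have e1 : (1 : Matrix (Fin n) (Fin n) ℝ) - H =
        (hE.eigenvectorUnitary : Matrix (Fin n) (Fin n) ℝ) *
          (1 - Matrix.diagonal (RCLike.ofReal ∘ hE.eigenvalues)) *
          (star (hE.eigenvectorUnitary : Matrix (Fin n) (Fin n) ℝ)) := by
      rw [mul_sub, sub_mul, mul_one, hone]
      conv_lhs => rw [hE.spectral_theorem, Unitary.conjStarAlgAut_apply]
    rw [e1, Matrix.det_mul, Matrix.det_mul]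
    have e2 : (1 : Matrix (Fin n) (Fin n) ℝ) - Matrix.diagonal (RCLike.ofReal ∘ hE.eigenvalues)
        = Matrix.diagonal (fun i => 1 - μ i) := by
      rw [← Matrix.diagonal_one, Matrix.diagonal_sub]
      simp [hμdef]
    rw [e2, Matrix.det_diagonal, mul_comm, ← mul_assoc, ← Matrix.det_mul,
      Unitary.coe_star_mul_self, Matrix.det_one, one_mul]
  have hμ1 : ∀ i, μ i < 1 := by
    intro i
    have hmem : i ∈ (Finset.univ : Finset (Fin n)) := Finset.mem_univ i
    have hsplit : μ i + ∑ j ∈ Finset.univ.erase i, μ j = 1 := by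
      rw [Finset.add_sum_erase _ _ hmem, htrace]
    have hpos2 : 0 < ∑ j ∈ Finset.univ.erase i, μ j := by
      apply Finset.sum_pos (fun j _ => hpos j)
      rw [← Finset.card_pos, Finset.card_erase_of_mem hmem, Finset.card_univ, Fintype.card_fin]
      omega
    linarith
  have hdetpos : 0 < H.det := hH.det_pos
  have hdet2pos : 0 < (1 - H).det := by
    rw [hdet2]; exact Finset.prod_pos fun i _ => by linarith [hμ1 i]
  have hLHSpos : 0 < Real.sqrt H.det / (1 - H).det := by positivity
  have hsn : 0 < Real.sqrt n := Real.sqrt_pos.2 hn0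
  have hRHSpos : 0 < (Real.sqrt n / ((n:ℝ) - 1)) ^ n := by
    apply pow_pos; apply div_pos hsn; linarith
  have hlogLHS : Real.log (Real.sqrt H.det / (1 - H).det) = ∑ i, gg (μ i) := by
    rw [Real.log_div (by positivity) hdet2pos.ne', Real.log_sqrt hdetpos.le, hdet, hdet2,
      Real.log_prod (fun i _ => (hpos i).ne'),
      Real.log_prod (fun i _ => by linarith [hμ1 i] : ∀ i ∈ Finset.univ, 1 - μ i ≠ 0)]
    unfold gg
    rw [Finset.sum_sub_distrib, Finset.sum_div]
  have hlogRHS : Real.log ((Real.sqrt n / ((n:ℝ) - 1)) ^ n) = n * gg (1/(n:ℝ)) := by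
    rw [Real.log_pow, gg_inv (by linarith : (1:ℝ) < n),
      Real.log_div hsn.ne' (by linarith : ((n:ℝ) - 1) ≠ 0), Real.log_sqrt hn0.le]
  obtain ⟨hle, hiff⟩ := scalar_main hn μ hpos htrace
  constructor
  · rw [← Real.log_le_log_iff hLHSpos hRHSpos, hlogLHS, hlogRHS]
    exact hle
  constructor
  · intro heq
    have hlogeq : ∑ i, gg (μ i) = n * gg (1/(n:ℝ)) := by
      rw [← hlogLHS, ← hlogRHS, heq]
    have hall := hiff.1 hlogeq
    have hdiag : Matrix.diagonal (RCLike.ofReal ∘ hE.eigenvalues)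
        = ((n:ℝ)⁻¹) • (1 : Matrix (Fin n) (Fin n) ℝ) := by
      have hfun : (RCLike.ofReal ∘ hE.eigenvalues : Fin n → ℝ) = fun _ => (n:ℝ)⁻¹ := by
        funext i
        simp only [Function.comp_apply, RCLike.ofReal_real_eq_id, id_eq, ← hμdef, hall i, one_div]
      rw [hfun, Matrix.smul_one_eq_diagonal]
    conv_lhs => rw [hE.spectral_theorem, Unitary.conjStarAlgAut_apply]
    rw [hdiag, Matrix.mul_smul, mul_one, Matrix.smul_mul, hone]
  · intro hH1
    subst hH1
    have hd1 : ((((n:ℝ)⁻¹) • (1 : Matrix (Fin n) (Fin n) ℝ)).det) = ((n:ℝ)⁻¹)^n := by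
      rw [Matrix.det_smul, Matrix.det_one, Fintype.card_fin, mul_one]
    have hd2 : ((1 : Matrix (Fin n) (Fin n) ℝ) - ((n:ℝ)⁻¹) • 1).det = (1 - (n:ℝ)⁻¹)^n := by
      have : (1 : Matrix (Fin n) (Fin n) ℝ) - ((n:ℝ)⁻¹) • 1 = (1 - (n:ℝ)⁻¹) • 1 := by
        rw [sub_smul, one_smul]
      rw [this, Matrix.det_smul, Matrix.det_one, Fintype.card_fin, mul_one]
    rw [hd1, hd2, sqrt_pow' (by positivity), Real.sqrt_inv, ← div_pow]
    congr 1
    have hss : Real.sqrt n * Real.sqrt n = n := Real.mul_self_sqrt hn0.le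
    have h1 : (1:ℝ) - (n:ℝ)⁻¹ = ((n:ℝ)-1)/n := by field_simp
    rw [h1, div_div_eq_mul_div]
    congr 1
    rw [← hss]
    field_simp
    rw [Real.sqrt_sq (Real.sqrt_nonneg _)]
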